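/- Let p > 2, a > 0 and 0 ≤ b ≤ p − 1, and let f(s,t) = (a/p)(|s|^p + 2b|s|^{p/2}|t|^{p/2} + |t|^p). Then for all real s, t with s ≠ 0, t ≠ 0 and |s| ≠ |t|, the Hessian matrix D²f(s,t) of second partial derivatives of f at (s,t) is (strictly) positive definite; in particular its trace equals a(p−1)(|s|^{p−2} + |t|^{p−2}) + a (b/2)(p−2)(|s|^{p/2−2}|t|^{p/2} + |t|^{p/2−2}|s|^{p/2}) > 0. -/

import Mathlib

open Real

noncomputable def Lm (c d : ℝ) : ℝ × ℝ →L[ℝ] ℝ :=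
  c • ContinuousLinearMap.fst ℝ ℝ ℝ + d • ContinuousLinearMap.snd ℝ ℝ ℝ

@[simp] lemma Lm_apply (c d : ℝ) (v : ℝ × ℝ) : Lm c d v = c * v.1 + d * v.2 := by
  simp [Lm]

lemma sq_rpow_eq (x r : ℝ) : (x ^ 2) ^ r = |x| ^ (2 * r) := by
  rw [← sq_abs, ← Real.rpow_natCast |x| 2, ← Real.rpow_mul (abs_nonneg x)]
  norm_num

lemma aux1 (r : ℝ) {x : ℝ} (hx : x ≠ 0) :
    HasDerivAt (fun y : ℝ => (y ^ 2) ^ r) (2 * r * x * (x ^ 2) ^ (r - 1)) x := by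
  have h := (hasDerivAt_pow 2 x).rpow_const (p := r) (Or.inl (pow_ne_zero 2 hx))
  convert h using 1
  push_cast
  ring

lemma aux2 (r : ℝ) {x : ℝ} (hx : x ≠ 0) :
    HasDerivAt (fun y : ℝ => y * (y ^ 2) ^ r) ((2 * r + 1) * (x ^ 2) ^ r) x := by
  have h : HasDerivAt (fun y : ℝ => y * (y ^ 2) ^ r) (1 * (x ^ 2) ^ r + id x * (2 * r * x * (x ^ 2) ^ (r - 1))) x :=
    (hasDerivAt_id x).mul (aux1 r hx)
  have h2 : (x ^ 2) ^ (r - 1) * x ^ 2 = (x ^ 2) ^ r := by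
    rw [← Real.rpow_add_one (by positivity : (x:ℝ)^2 ≠ 0) (r-1)]
    ring_nf
  convert h using 1
  simp only [id_eq]
  linear_combination (-2) * r * h2

lemma step1 (p a b : ℝ) (hp : p ≠ 0) {x y : ℝ} (hx : x ≠ 0) (hy : y ≠ 0) :
    HasFDerivAt
      (fun q : ℝ × ℝ => (a / p) * ((q.1 ^ 2) ^ (p/2) + 2*b*(q.1 ^ 2) ^ (p/4) * (q.2 ^ 2) ^ (p/4) + (q.2 ^ 2) ^ (p/2)))
      (Lm (a*(x*(x^2)^(p/2-1)) + a*b*((x*(x^2)^(p/4-1))*(y^2)^(p/4)))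
          (a*(y*(y^2)^(p/2-1)) + a*b*((y*(y^2)^(p/4-1))*(x^2)^(p/4)))) (x, y) := by
  have hfst : HasFDerivAt (fun q : ℝ × ℝ => q.1) (ContinuousLinearMap.fst ℝ ℝ ℝ) (x,y) := hasFDerivAt_fst
  have hsnd : HasFDerivAt (fun q : ℝ × ℝ => q.2) (ContinuousLinearMap.snd ℝ ℝ ℝ) (x,y) := hasFDerivAt_snd
  have hF1 := (aux1 (p/2) hx).comp_hasFDerivAt (x,y) hfst
  have hF2 := (aux1 (p/2) hy).comp_hasFDerivAt (x,y) hsnd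
  have hG1 := (aux1 (p/4) hx).comp_hasFDerivAt (x,y) hfst
  have hG2 := (aux1 (p/4) hy).comp_hasFDerivAt (x,y) hsnd
  have h := ((hF1.add ((hG1.const_mul (2*b)).mul hG2)).add hF2).const_mul (a/p)
  refine HasFDerivAt.congr_fderiv h ?_
  refine ContinuousLinearMap.ext fun v => ?_
  simp [Lm, Function.comp]
  field_simp
  ring

lemma step2 (p a b : ℝ) {x y : ℝ} (hx : x ≠ 0) (hy : y ≠ 0) :
    HasFDerivAt
      (fun q : ℝ × ℝ =>
        Lm (a*(q.1*(q.1^2)^(p/2-1)) + a*b*((q.1*(q.1^2)^(p/4-1))*(q.2^2)^(p/4)))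
           (a*(q.2*(q.2^2)^(p/2-1)) + a*b*((q.2*(q.2^2)^(p/4-1))*(q.1^2)^(p/4))))
      ((Lm (a*(p-1)*(x^2)^(p/2-1) + a*b*(p/2-1)*((x^2)^(p/4-1)*(y^2)^(p/4)))
           (a*b*(p/2)*(x*y*((x^2)^(p/4-1)*(y^2)^(p/4-1))))).smulRight (ContinuousLinearMap.fst ℝ ℝ ℝ) +
       (Lm (a*b*(p/2)*(x*y*((x^2)^(p/4-1)*(y^2)^(p/4-1))))
           (a*(p-1)*(y^2)^(p/2-1) + a*b*(p/2-1)*((y^2)^(p/4-1)*(x^2)^(p/4)))).smulRight (ContinuousLinearMap.snd ℝ ℝ ℝ)) (x, y) := by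
  have hfst : HasFDerivAt (fun q : ℝ × ℝ => q.1) (ContinuousLinearMap.fst ℝ ℝ ℝ) (x,y) := hasFDerivAt_fst
  have hsnd : HasFDerivAt (fun q : ℝ × ℝ => q.2) (ContinuousLinearMap.snd ℝ ℝ ℝ) (x,y) := hasFDerivAt_snd
  have hφ1 : HasFDerivAt
      (fun q : ℝ × ℝ => a*(q.1*(q.1^2)^(p/2-1)) + a*b*((q.1*(q.1^2)^(p/4-1))*(q.2^2)^(p/4)))
      (Lm (a*(p-1)*(x^2)^(p/2-1) + a*b*(p/2-1)*((x^2)^(p/4-1)*(y^2)^(p/4)))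
          (a*b*(p/2)*(x*y*((x^2)^(p/4-1)*(y^2)^(p/4-1))))) (x,y) := by
    have h1 := ((aux2 (p/2-1) hx).comp_hasFDerivAt (x,y) hfst).const_mul a
    have h2u := (aux2 (p/4-1) hx).comp_hasFDerivAt (x,y) hfst
    have h2v := (aux1 (p/4) hy).comp_hasFDerivAt (x,y) hsnd
    have h := h1.add ((h2u.mul h2v).const_mul (a*b))
    refine HasFDerivAt.congr_fderiv h ?_
    refine ContinuousLinearMap.ext fun v => ?_
    simp [Lm, Function.comp]
    ring
  have hφ2 : HasFDerivAt
      (fun q : ℝ × ℝ => a*(q.2*(q.2^2)^(p/2-1)) + a*b*((q.2*(q.2^2)^(p/4-1))*(q.1^2)^(p/4)))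
      (Lm (a*b*(p/2)*(x*y*((x^2)^(p/4-1)*(y^2)^(p/4-1))))
          (a*(p-1)*(y^2)^(p/2-1) + a*b*(p/2-1)*((y^2)^(p/4-1)*(x^2)^(p/4)))) (x,y) := by
    have h1 := ((aux2 (p/2-1) hy).comp_hasFDerivAt (x,y) hsnd).const_mul a
    have h2u := (aux2 (p/4-1) hy).comp_hasFDerivAt (x,y) hsnd
    have h2v := (aux1 (p/4) hx).comp_hasFDerivAt (x,y) hfst
    have h := h1.add ((h2u.mul h2v).const_mul (a*b))
    refine HasFDerivAt.congr_fderiv h ?_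
    refine ContinuousLinearMap.ext fun v => ?_
    simp [Lm, Function.comp]
    ring
  have h := (hφ1.smul (hasFDerivAt_const (ContinuousLinearMap.fst ℝ ℝ ℝ) (x,y))).add
    (hφ2.smul (hasFDerivAt_const (ContinuousLinearMap.snd ℝ ℝ ℝ) (x,y)))
  refine HasFDerivAt.congr_fderiv h ?_
  refine ContinuousLinearMap.ext fun v => ?_
  refine ContinuousLinearMap.ext fun w => ?_
  simp [Lm]

lemma quadpos2 (p a b α β U W : ℝ) (hp : 2 < p) (ha : 0 < a) (hb0 : 0 ≤ b) (hb1 : b ≤ p-1)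
    (hα : 0 < α) (hβ : 0 < β) (hne : α ≠ β) (hUW : U ≠ 0 ∨ W ≠ 0) :
    0 < a*(((p-1)*α^2 + b*(p/2-1)*(α*β))*U^2 + p*b*(α*β)*(U*W)
        + ((p-1)*β^2 + b*(p/2-1)*(α*β))*W^2) := by
  have hp1 : (0:ℝ) < p - 1 := by linarith
  have hE : 0 < (p-1)*α^2 + b*(p/2-1)*(α*β) := by
    nlinarith [mul_pos hα hα, mul_pos hα hβ, mul_pos hp1 (mul_pos hα hα),
      mul_nonneg (mul_nonneg hb0 (by linarith : (0:ℝ) ≤ p/2-1)) (mul_pos hα hβ).le]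
  have hD : 0 < ((p-1)*α^2 + b*(p/2-1)*(α*β))*((p-1)*β^2 + b*(p/2-1)*(α*β))
      - (p*b*(α*β)/2)^2 := by
    have hid : ((p-1)*α^2 + b*(p/2-1)*(α*β))*((p-1)*β^2 + b*(p/2-1)*(α*β))
        - (p*b*(α*β)/2)^2
        = (p-1)*((α*β)*((p-1-b)*(b+1)*(α*β) + b*(p/2-1)*(α-β)^2)) := by ring
    rw [hid]
    have hsq : 0 < (α-β)^2 :=
      lt_of_le_of_ne (sq_nonneg _) (Ne.symm (pow_ne_zero 2 (sub_ne_zero.mpr hne)))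
    rcases eq_or_lt_of_le hb0 with hb | hb
    · have hinner : 0 < (p-1-b)*(b+1)*(α*β) + b*(p/2-1)*(α-β)^2 := by
        rw [← hb]
        have := mul_pos hα hβ
        nlinarith
      exact mul_pos hp1 (mul_pos (mul_pos hα hβ) hinner)
    · have h1 : 0 ≤ (p-1-b)*(b+1)*(α*β) :=
        mul_nonneg (mul_nonneg (by linarith) (by linarith)) (mul_pos hα hβ).le
      have h2 : 0 < b*(p/2-1)*(α-β)^2 := mul_pos (mul_pos hb (by linarith)) hsq
      exact mul_pos hp1 (mul_pos (mul_pos hα hβ) (by linarith))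
  by_cases hW : W = 0
  · have hU : U ≠ 0 := hUW.resolve_right fun h => h hW
    have hU2 : 0 < U^2 := lt_of_le_of_ne (sq_nonneg U) (Ne.symm (pow_ne_zero 2 hU))
    subst hW
    nlinarith [mul_pos ha (mul_pos hE hU2)]
  · have hW2 : 0 < W^2 := lt_of_le_of_ne (sq_nonneg W) (Ne.symm (pow_ne_zero 2 hW))
    have hinner : 0 < ((p-1)*α^2 + b*(p/2-1)*(α*β))*U^2 + p*b*(α*β)*(U*W)
        + ((p-1)*β^2 + b*(p/2-1)*(α*β))*W^2 := by
      nlinarith [sq_nonneg (((p-1)*α^2 + b*(p/2-1)*(α*β))*U + (p*b*(α*β)/2)*W),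
        mul_pos hD hW2, hE]
    exact mul_pos ha hinner

set_option maxHeartbeats 1000000 in
/-- for `p > 2`, `a > 0`, `0 ≤ b ≤ p - 1` and `s ≠ 0`, `t ≠ 0`, `|s| ≠ |t|`,
the Hessian of `f(s,t) = (a/p)(|s|^p + 2b|s|^(p/2)|t|^(p/2) + |t|^p)` at `(s,t)` is strictly
positive definite; in particular its trace equals
`a(p-1)(|s|^(p-2) + |t|^(p-2)) + a(b/2)(p-2)(|s|^(p/2-2)|t|^(p/2) + |t|^(p/2-2)|s|^(p/2)) > 0`. -/
theorem stmt_16 (p a b : ℝ) (hp : 2 < p) (ha : 0 < a) (hb0 : 0 ≤ b) (hb1 : b ≤ p - 1)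
    (f : ℝ × ℝ → ℝ)
    (hf : ∀ q : ℝ × ℝ,
      f q = (a / p) * (|q.1| ^ p + 2 * b * |q.1| ^ (p / 2) * |q.2| ^ (p / 2) + |q.2| ^ p))
    (s t : ℝ) (hs : s ≠ 0) (ht : t ≠ 0) (hst : |s| ≠ |t|) :
    (∀ v : ℝ × ℝ, v ≠ 0 → 0 < fderiv ℝ (fderiv ℝ f) (s, t) v v) ∧
      fderiv ℝ (fderiv ℝ f) (s, t) (1, 0) (1, 0) + fderiv ℝ (fderiv ℝ f) (s, t) (0, 1) (0, 1) =
        a * (p - 1) * (|s| ^ (p - 2) + |t| ^ (p - 2)) +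
          a * (b / 2) * (p - 2) *
            (|s| ^ (p / 2 - 2) * |t| ^ (p / 2) + |t| ^ (p / 2 - 2) * |s| ^ (p / 2)) ∧
      0 < a * (p - 1) * (|s| ^ (p - 2) + |t| ^ (p - 2)) +
          a * (b / 2) * (p - 2) *
            (|s| ^ (p / 2 - 2) * |t| ^ (p / 2) + |t| ^ (p / 2 - 2) * |s| ^ (p / 2)) := by
  have hp0 : p ≠ 0 := by positivity
  have hfeq : f = fun q : ℝ × ℝ =>
      (a / p) * ((q.1 ^ 2) ^ (p/2) + 2*b*(q.1 ^ 2) ^ (p/4) * (q.2 ^ 2) ^ (p/4) + (q.2 ^ 2) ^ (p/2)) := by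
    funext q
    rw [hf q, sq_rpow_eq, sq_rpow_eq, sq_rpow_eq, sq_rpow_eq]
    ring_nf
  subst hfeq
  -- the first derivative, in a neighborhood of (s,t)
  have hev : fderiv ℝ (fun q : ℝ × ℝ =>
      (a / p) * ((q.1 ^ 2) ^ (p/2) + 2*b*(q.1 ^ 2) ^ (p/4) * (q.2 ^ 2) ^ (p/4) + (q.2 ^ 2) ^ (p/2)))
      =ᶠ[nhds ((s : ℝ), t)] fun q : ℝ × ℝ =>
        Lm (a*(q.1*(q.1^2)^(p/2-1)) + a*b*((q.1*(q.1^2)^(p/4-1))*(q.2^2)^(p/4)))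
           (a*(q.2*(q.2^2)^(p/2-1)) + a*b*((q.2*(q.2^2)^(p/4-1))*(q.1^2)^(p/4))) := by
    have hopen : IsOpen {q : ℝ × ℝ | q.1 ≠ 0 ∧ q.2 ≠ 0} :=
      IsOpen.inter (isOpen_ne.preimage continuous_fst) (isOpen_ne.preimage continuous_snd)
    filter_upwards [hopen.mem_nhds ⟨hs, ht⟩] with q hq
    exact (step1 p a b hp0 hq.1 hq.2).fderiv
  have hDeq : fderiv ℝ (fderiv ℝ (fun q : ℝ × ℝ =>
      (a / p) * ((q.1 ^ 2) ^ (p/2) + 2*b*(q.1 ^ 2) ^ (p/4) * (q.2 ^ 2) ^ (p/4) + (q.2 ^ 2) ^ (p/2)))) (s, t)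
      = ((Lm (a*(p-1)*(s^2)^(p/2-1) + a*b*(p/2-1)*((s^2)^(p/4-1)*(t^2)^(p/4)))
           (a*b*(p/2)*(s*t*((s^2)^(p/4-1)*(t^2)^(p/4-1))))).smulRight (ContinuousLinearMap.fst ℝ ℝ ℝ) +
       (Lm (a*b*(p/2)*(s*t*((s^2)^(p/4-1)*(t^2)^(p/4-1))))
           (a*(p-1)*(t^2)^(p/2-1) + a*b*(p/2-1)*((t^2)^(p/4-1)*(s^2)^(p/4)))).smulRight (ContinuousLinearMap.snd ℝ ℝ ℝ)) := by
    rw [hev.fderiv_eq]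
    exact (step2 p a b hs ht).fderiv
  rw [hDeq]
  -- abbreviations and rpow facts
  have hs2 : (0:ℝ) < s^2 := by positivity
  have ht2 : (0:ℝ) < t^2 := by positivity
  have hA2 : 0 < (s^2)^(p/4-1) := Real.rpow_pos_of_pos hs2 _
  have hB2 : 0 < (t^2)^(p/4-1) := Real.rpow_pos_of_pos ht2 _
  have rA3 : (s^2)^(p/4) = (s^2)^(p/4-1) * s^2 := by
    rw [← Real.rpow_add_one (ne_of_gt hs2) (p/4-1)]; norm_num
  have rB3 : (t^2)^(p/4) = (t^2)^(p/4-1) * t^2 := by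
    rw [← Real.rpow_add_one (ne_of_gt ht2) (p/4-1)]; norm_num
  have rA1 : (s^2)^(p/2-1) = (s^2)^(p/4-1) * (s^2)^(p/4) := by
    rw [← Real.rpow_add hs2]; congr 1; ring
  have rB1 : (t^2)^(p/2-1) = (t^2)^(p/4-1) * (t^2)^(p/4) := by
    rw [← Real.rpow_add ht2]; congr 1; ring
  have cs1 : (s^2)^(p/2-1) = |s|^(p-2) := by rw [sq_rpow_eq]; congr 1; ring
  have ct1 : (t^2)^(p/2-1) = |t|^(p-2) := by rw [sq_rpow_eq]; congr 1; ring
  have cs2 : (s^2)^(p/4-1) = |s|^(p/2-2) := by rw [sq_rpow_eq]; congr 1; ring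
  have ct2 : (t^2)^(p/4-1) = |t|^(p/2-2) := by rw [sq_rpow_eq]; congr 1; ring
  have cs3 : (s^2)^(p/4) = |s|^(p/2) := by rw [sq_rpow_eq]; congr 1; ring
  have ct3 : (t^2)^(p/4) = |t|^(p/2) := by rw [sq_rpow_eq]; congr 1; ring
  have hαβ : (s^2)^(p/4-1) * s^2 ≠ (t^2)^(p/4-1) * t^2 := by
    rw [← rA3, ← rB3, cs3, ct3]
    rcases lt_or_gt_of_ne hst with h | h
    · exact ne_of_lt (Real.rpow_lt_rpow (abs_nonneg s) h (by linarith))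
    · exact (ne_of_lt (Real.rpow_lt_rpow (abs_nonneg t) h (by linarith))).symm
  refine ⟨?_, ?_, ?_⟩
  · -- positive definiteness
    intro v hv
    simp only [ContinuousLinearMap.add_apply, ContinuousLinearMap.smulRight_apply,
      ContinuousLinearMap.smul_apply, ContinuousLinearMap.coe_fst',
      ContinuousLinearMap.coe_snd', Lm_apply, smul_eq_mul]
    have hv1 : v.1 ≠ 0 ∨ v.2 ≠ 0 := by
      by_contra hcon
      push_neg at hcon
      exact hv (Prod.ext hcon.1 hcon.2)
    have hUW : t * v.1 ≠ 0 ∨ s * v.2 ≠ 0 := by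
      rcases hv1 with h | h
      · exact Or.inl (mul_ne_zero ht h)
      · exact Or.inr (mul_ne_zero hs h)
    have hq := quadpos2 p a b ((s^2)^(p/4-1) * s^2) ((t^2)^(p/4-1) * t^2) (t*v.1) (s*v.2)
      hp ha hb0 hb1 (mul_pos hA2 hs2) (mul_pos hB2 ht2) hαβ hUW
    have hst2 : (0:ℝ) < s^2 * t^2 := mul_pos hs2 ht2
    have hbridge : s^2 * t^2 * (((a*(p-1)*(s^2)^(p/2-1) + a*b*(p/2-1)*((s^2)^(p/4-1)*(t^2)^(p/4)))*v.1
            + a*b*(p/2)*(s*t*((s^2)^(p/4-1)*(t^2)^(p/4-1)))*v.2) * v.1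
          + (a*b*(p/2)*(s*t*((s^2)^(p/4-1)*(t^2)^(p/4-1)))*v.1
            + (a*(p-1)*(t^2)^(p/2-1) + a*b*(p/2-1)*((t^2)^(p/4-1)*(s^2)^(p/4)))*v.2) * v.2)
        = a*(((p-1)*((s^2)^(p/4-1)*s^2)^2
              + b*(p/2-1)*(((s^2)^(p/4-1)*s^2)*((t^2)^(p/4-1)*t^2)))*(t*v.1)^2
            + p*b*(((s^2)^(p/4-1)*s^2)*((t^2)^(p/4-1)*t^2))*((t*v.1)*(s*v.2))
            + ((p-1)*((t^2)^(p/4-1)*t^2)^2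
              + b*(p/2-1)*(((s^2)^(p/4-1)*s^2)*((t^2)^(p/4-1)*t^2)))*(s*v.2)^2) := by
      rw [rA1, rA3, rB1, rB3]; ring
    nlinarith [hq, hbridge, hst2]
  · -- the trace
    simp only [ContinuousLinearMap.add_apply, ContinuousLinearMap.smulRight_apply,
      ContinuousLinearMap.smul_apply, ContinuousLinearMap.coe_fst',
      ContinuousLinearMap.coe_snd', Lm_apply, smul_eq_mul]
    rw [cs1, ct1, cs2, ct2, cs3, ct3]
    ring
  · -- positivity of the trace
    have h1 : 0 < |s|^(p-2) := Real.rpow_pos_of_pos (abs_pos.mpr hs) _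
    have h2 : 0 < |t|^(p-2) := Real.rpow_pos_of_pos (abs_pos.mpr ht) _
    have h3 : 0 ≤ |s|^(p/2-2) * |t|^(p/2) :=
      mul_nonneg (Real.rpow_nonneg (abs_nonneg s) _) (Real.rpow_nonneg (abs_nonneg t) _)
    have h4 : 0 ≤ |t|^(p/2-2) * |s|^(p/2) :=
      mul_nonneg (Real.rpow_nonneg (abs_nonneg t) _) (Real.rpow_nonneg (abs_nonneg s) _)
    nlinarith [mul_pos (mul_pos ha (by linarith : (0:ℝ) < p - 1)) (add_pos h1 h2),
      mul_nonneg (mul_nonneg (mul_nonneg ha.le (by linarith : (0:ℝ) ≤ b/2))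
        (by linarith : (0:ℝ) ≤ p - 2)) (add_nonneg h3 h4)]
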